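/- A subset A of a semigroup S is piecewise syndetic if and only if there exists an ultrafilter U ∈ K(βS) with A ∈ U. -/

import Mathlib

open Filter

attribute [local instance] Ultrafilter.mul Ultrafilter.semigroup

/-- `A` is piecewise syndetic. -/
def PiecewiseSyndetic {S : Type*} [Semigroup S] (A : Set S) : Prop :=
  ∃ G : Finset S, ∀ L : Finset S, ∃ a : S, ∀ l ∈ L, ∃ g ∈ G, g * (l * a) ∈ A

/-- A two-sided ideal of the ultrafilter semigroup `βS`. -/
def IsIdeal {S : Type*} [Semigroup S] (I : Set (Ultrafilter S)) : Prop :=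
  I.Nonempty ∧ ∀ V ∈ I, ∀ W : Ultrafilter S, W * V ∈ I ∧ V * W ∈ I

/-- Membership in the smallest two-sided ideal `K(βS)`, i.e. membership in every
two-sided ideal of `βS`. -/
def MemK {S : Type*} [Semigroup S] (U : Ultrafilter S) : Prop :=
  ∀ I : Set (Ultrafilter S), IsIdeal I → U ∈ I

section Aux

variable {S : Type*} [Semigroup S]

theorem mem_ultra_mul {A : Set S} {U V : Ultrafilter S} :
    A ∈ U * V ↔ {a | {b | a * b ∈ A} ∈ V} ∈ U := Iff.rfl

/-- A nonempty closed left ideal of `βS`. -/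
def CLI (I : Set (Ultrafilter S)) : Prop :=
  I.Nonempty ∧ IsClosed I ∧ ∀ V ∈ I, ∀ W : Ultrafilter S, W * V ∈ I

/-- A minimal nonempty closed left ideal. -/
def MinCLI (L : Set (Ultrafilter S)) : Prop :=
  CLI L ∧ ∀ L', CLI L' → L' ⊆ L → L' = L

theorem cli_range (u : Ultrafilter S) : CLI (Set.range (· * u)) := by
  refine ⟨⟨u * u, u, rfl⟩, ?_, ?_⟩
  · rw [← Set.image_univ]
    exact (isCompact_univ.image (Ultrafilter.continuous_mul_left u)).isClosed
  · rintro V ⟨x, rfl⟩ W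
    exact ⟨W * x, mul_assoc W x u⟩

theorem exists_min_cli {I : Set (Ultrafilter S)} (hI : CLI I) :
    ∃ L, L ⊆ I ∧ MinCLI L := by
  have hchain : ∀ c ⊆ {J : Set (Ultrafilter S) | CLI J}, IsChain (· ⊆ ·) c → c.Nonempty →
      ∃ lb ∈ {J : Set (Ultrafilter S) | CLI J}, ∀ s ∈ c, lb ⊆ s := by
    intro c hcS hc hcne
    refine ⟨⋂₀ c, ⟨?_, ?_, ?_⟩, fun s hs => Set.sInter_subset_of_mem hs⟩
    · haveI : Nonempty c := hcne.to_subtype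
      rw [Set.sInter_eq_iInter]
      apply IsCompact.nonempty_iInter_of_directed_nonempty_isCompact_isClosed
      · rintro ⟨i, hi⟩ ⟨j, hj⟩
        rcases eq_or_ne i j with rfl | hne
        · exact ⟨⟨i, hi⟩, le_refl _, le_refl _⟩
        · rcases hc hi hj hne with h | h
          · exact ⟨⟨i, hi⟩, le_refl _, h⟩
          · exact ⟨⟨j, hj⟩, h, le_refl _⟩
      · exact fun i => (hcS i.2).1
      · exact fun i => (hcS i.2).2.1.isCompact
      · exact fun i => (hcS i.2).2.1
    · exact isClosed_sInter fun J hJ => (hcS hJ).2.1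
    · intro V hV W J hJ
      exact (hcS hJ).2.2 V (hV J hJ) W
  obtain ⟨m, hmI, hmin⟩ := zorn_superset_nonempty {J : Set (Ultrafilter S) | CLI J} hchain I hI
  exact ⟨m, hmI, hmin.prop,
    fun L' hL' hsub => Set.Subset.antisymm hsub (hmin.2 hL' hsub)⟩

theorem min_cli_range_eq {L : Set (Ultrafilter S)} (hL : MinCLI L) {v : Ultrafilter S}
    (hv : v ∈ L) : Set.range (· * v) = L :=
  hL.2 _ (cli_range v) (by rintro _ ⟨x, rfl⟩; exact hL.1.2.2 v hv x)

theorem minCLI_image {L : Set (Ultrafilter S)} (hL : MinCLI L) (W : Ultrafilter S) :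
    MinCLI ((· * W) '' L) := by
  obtain ⟨⟨hne, hcl, hli⟩, hmin⟩ := hL
  refine ⟨⟨hne.image _, (hcl.isCompact.image (Ultrafilter.continuous_mul_left W)).isClosed, ?_⟩, ?_⟩
  · rintro V ⟨x, hx, rfl⟩ q
    exact ⟨q * x, hli x hx q, mul_assoc q x W⟩
  · rintro L' ⟨⟨z, hz⟩, hcl', hli'⟩ hsub
    have hL'' : CLI (L ∩ (· * W) ⁻¹' L') := by
      refine ⟨?_, ?_, ?_⟩
      · obtain ⟨x, hxL, hxW⟩ := hsub hz
        exact ⟨x, hxL, by simpa [hxW] using hz⟩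
      · exact hcl.inter (hcl'.preimage (Ultrafilter.continuous_mul_left W))
      · rintro V ⟨hVL, hVW⟩ q
        refine ⟨hli V hVL q, ?_⟩
        show q * V * W ∈ L'
        rw [mul_assoc]
        exact hli' _ hVW q
    have heq := hmin _ hL'' Set.inter_subset_left
    refine Set.Subset.antisymm hsub fun y hy => ?_
    obtain ⟨x, hxL, rfl⟩ := hy
    have : x ∈ L ∩ (· * W) ⁻¹' L' := heq.symm ▸ hxL
    exact this.2

/-- The union of all minimal nonempty closed left ideals. -/
def KSet (S : Type*) [Semigroup S] : Set (Ultrafilter S) :=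
  {v | ∃ L, MinCLI L ∧ v ∈ L}

theorem kset_isIdeal [Nonempty S] : IsIdeal (KSet S) := by
  constructor
  · obtain ⟨L, _, hLmin⟩ := exists_min_cli (cli_range (pure (Classical.arbitrary S)))
    obtain ⟨v, hv⟩ := hLmin.1.1
    exact ⟨v, L, hLmin, hv⟩
  · rintro V ⟨L, hLmin, hVL⟩ W
    constructor
    · exact ⟨L, hLmin, hLmin.1.2.2 V hVL W⟩
    · exact ⟨(· * W) '' L, minCLI_image hLmin W, ⟨V, hVL, rfl⟩⟩

theorem kset_memK {v : Ultrafilter S} (hv : v ∈ KSet S) : MemK v := by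
  rintro I ⟨⟨w, hw⟩, hI⟩
  obtain ⟨L, hLmin, hvL⟩ := hv
  have hwv : w * v ∈ L := hLmin.1.2.2 v hvL w
  have hwvI : w * v ∈ I := (hI w hw v).2
  have : v ∈ Set.range (· * (w * v)) := (min_cli_range_eq hLmin hwv).symm ▸ hvL
  obtain ⟨x, hx⟩ := this
  have := (hI (w * v) hwvI x).1
  rwa [show x * (w * v) = v from hx] at this

end Aux

/-- `A` is piecewise syndetic iff `A` belongs to some ultrafilter in `K(βS)`. -/
theorem stmt10 {S : Type*} [Semigroup S] (A : Set S) :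
    PiecewiseSyndetic A ↔ ∃ U : Ultrafilter S, MemK U ∧ A ∈ U := by
  constructor
  · rintro ⟨G, hG⟩
    obtain ⟨a0, -⟩ := hG (∅ : Finset S)
    classical
    haveI : Nonempty S := ⟨a0⟩
    set D : Set S := {u | ∃ g ∈ G, g * u ∈ A} with hD
    set F : Finset S → Filter S := fun L => 𝓟 (⋂ l ∈ L, {t | l * t ∈ D}) with hF
    have hdir : Directed (· ≥ ·) F := by
      intro L1 L2
      refine ⟨L1 ∪ L2, ?_, ?_⟩
      · refine principal_mono.2 fun x hx => ?_
        simp only [Set.mem_iInter] at hx ⊢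
        exact fun l hl => hx l (Finset.mem_union_left _ hl)
      · refine principal_mono.2 fun x hx => ?_
        simp only [Set.mem_iInter] at hx ⊢
        exact fun l hl => hx l (Finset.mem_union_right _ hl)
    have hne : ∀ L : Finset S, (⋂ l ∈ L, {t | l * t ∈ D}).Nonempty := by
      intro L
      obtain ⟨a, ha⟩ := hG L
      refine ⟨a, ?_⟩
      simp only [Set.mem_iInter]
      intro l hl
      exact ha l hl
    haveI : (⨅ L, F L).NeBot :=
      iInf_neBot_of_directed hdir fun L => principal_neBot_iff.2 (hne L)
    obtain ⟨q, hq⟩ := Ultrafilter.exists_le (⨅ L, F L)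
    have hq' : ∀ s : S, {t | s * t ∈ D} ∈ q := by
      intro s
      apply hq
      apply mem_iInf_of_mem ({s} : Finset S)
      rw [hF, mem_principal]
      intro x hx
      simpa using Set.mem_iInter₂.1 hx s (Finset.mem_singleton_self s)
    obtain ⟨L, hLsub, hLmin⟩ := exists_min_cli (cli_range q)
    obtain ⟨r, hr⟩ := hLmin.1.1
    have hDr : D ∈ r := by
      obtain ⟨x, rfl⟩ := hLsub hr
      show D ∈ x * q
      rw [mem_ultra_mul]
      have h : {a | {b | a * b ∈ D} ∈ q} = Set.univ := Set.eq_univ_of_forall hq'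
      rw [h]; exact univ_mem
    have hsplit : D = ⋃ g ∈ (G : Set S), {b | g * b ∈ A} := by
      ext u; simp [hD]
    rw [hsplit] at hDr
    obtain ⟨g, hgG, hgr⟩ := (Ultrafilter.finite_biUnion_mem_iff G.finite_toSet).1 hDr
    refine ⟨pure g * r, ?_, ?_⟩
    · exact kset_memK ⟨L, hLmin, hLmin.1.2.2 r hr (pure g)⟩
    · rw [mem_ultra_mul]
      rwa [Ultrafilter.mem_pure]
  · rintro ⟨U, hK, hA⟩
    obtain ⟨s0, -⟩ := Ultrafilter.nonempty_of_mem (univ_mem (f := (U : Filter S)))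
    haveI : Nonempty S := ⟨s0⟩
    obtain ⟨L, hLmin, hUL⟩ := hK _ kset_isIdeal
    set B : Set S := {t | {b | t * b ∈ A} ∈ U} with hB
    have key : ∀ q : Ultrafilter S, ∃ s : S, {t | s * t ∈ B} ∈ q := by
      intro q
      have h1 : q * U ∈ L := hLmin.1.2.2 U hUL q
      have h2 : U ∈ Set.range (· * (q * U)) := (min_cli_range_eq hLmin h1).symm ▸ hUL
      obtain ⟨r, hr⟩ := h2
      have hA' : A ∈ r * (q * U) := by
        rw [show r * (q * U) = U from hr]; exact hA
      rw [mem_ultra_mul] at hA'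
      obtain ⟨s, hs⟩ := Ultrafilter.nonempty_of_mem hA'
      rw [Set.mem_setOf_eq, mem_ultra_mul] at hs
      refine ⟨s, ?_⟩
      have hset : {t | s * t ∈ B} = {t | {b | s * (t * b) ∈ A} ∈ U} := by
        ext t
        simp only [hB, Set.mem_setOf_eq, mul_assoc]
      rw [hset]
      convert hs using 3
      exact Iff.rfl
    have hcover : (Set.univ : Set (Ultrafilter S)) ⊆
        ⋃ s : S, {q : Ultrafilter S | {t | s * t ∈ B} ∈ q} := by
      intro q _
      obtain ⟨s, hs⟩ := key q
      exact Set.mem_iUnion.2 ⟨s, hs⟩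
    obtain ⟨G, hGcov⟩ := isCompact_univ.elim_finite_subcover _
      (fun s : S => ultrafilter_isOpen_basic {t | s * t ∈ B}) hcover
    refine ⟨G, fun L => ?_⟩
    have hmem : ∀ l : S, ∃ g ∈ G, {b | g * l * b ∈ A} ∈ U := by
      intro l
      have := hGcov (Set.mem_univ (pure l : Ultrafilter S))
      simp only [Set.mem_iUnion, Set.mem_setOf_eq] at this
      obtain ⟨g, hgG, hg⟩ := this
      rw [Ultrafilter.mem_pure] at hg
      exact ⟨g, hgG, hg⟩
    have hint : (⋂ l ∈ (L : Set S), {b | ∃ g ∈ G, g * l * b ∈ A}) ∈ U := by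
      rw [← Ultrafilter.mem_coe, Filter.biInter_mem L.finite_toSet]
      intro l hl
      obtain ⟨g, hgG, h⟩ := hmem l
      exact mem_of_superset h fun b hb => ⟨g, hgG, hb⟩
    obtain ⟨a, ha⟩ := Ultrafilter.nonempty_of_mem hint
    refine ⟨a, fun l hl => ?_⟩
    simp only [Set.mem_iInter] at ha
    obtain ⟨g, hgG, h⟩ := ha l hl
    exact ⟨g, hgG, by rwa [mul_assoc] at h⟩
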